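/- The function f ↦ 1 - αβ_c - (1 - τ/(α(τ - Iw/f)))(β_e(f) - αβ_c), where β_e(f) = Ē/(μIwf²), first decreases and then increases in f on the interval (Iw/((1-1/α)τ), √(FĒ/(μwC))), provided the interval is nonempty and all quantities are positive. -/

import Mathlib

noncomputable def Psi (τ I w Ebar K μ α : ℝ) (f : ℝ) : ℝ :=
  τ * (I * w) * f * (Ebar - K * (μ * I * w) * f ^ 2)
    - 2 * Ebar * (τ * f - I * w) * ((α - 1) * τ * f - α * (I * w))

theorem aux_deriv (α τ c M E K : ℝ) (hα : α ≠ 0) {f : ℝ} (hf : f ≠ 0)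
    (hden : τ * f - c ≠ 0) (hM : M ≠ 0) :
    HasDerivAt (fun f => 1 - K - (1 - τ / (α * (τ - c / f))) * (E / (M * f ^ 2) - K))
      (-(τ * c * f * (E - K * M * f ^ 2) - 2 * E * (τ * f - c) * ((α - 1) * τ * f - α * c))
        / (α * M * (τ * f - c) ^ 2 * f ^ 3)) f := by
  have key : τ - c / f = (τ * f - c) / f := by field_simp
  have hτc : τ - c / f ≠ 0 := by rw [key]; exact div_ne_zero hden hf
  have hαc : α * (τ - c / f) ≠ 0 := mul_ne_zero hα hτc
  have d1 : HasDerivAt (fun x : ℝ => c / x) ((0 * f - c * 1) / f ^ 2) f :=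
    (hasDerivAt_const f c).div (hasDerivAt_id f) hf
  have d2 : HasDerivAt (fun x : ℝ => τ - c / x) (0 - (0 * f - c * 1) / f ^ 2) f :=
    (hasDerivAt_const f τ).sub d1
  have d3 := d2.const_mul α
  have d4 : HasDerivAt (fun x : ℝ => τ / (α * (τ - c / x)))
      ((0 * (α * (τ - c / f)) - τ * (α * (0 - (0 * f - c * 1) / f ^ 2))) / (α * (τ - c / f)) ^ 2) f :=
    (hasDerivAt_const f τ).div d3 hαc
  have d5 := (hasDerivAt_const f (1:ℝ)).sub d4
  have d6a : HasDerivAt (fun x : ℝ => M * x ^ 2) (M * (↑2 * f ^ 1)) f :=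
    (hasDerivAt_pow 2 f).const_mul M
  have d6 : HasDerivAt (fun x : ℝ => E / (M * x ^ 2))
      ((0 * (M * f ^ 2) - E * (M * (↑2 * f ^ 1))) / (M * f ^ 2) ^ 2) f :=
    (hasDerivAt_const f E).div d6a (mul_ne_zero hM (pow_ne_zero 2 hf))
  have d7 := d6.sub_const K
  have d8 := d5.mul d7
  have d9 := (hasDerivAt_const f (1 - K)).sub d8
  refine d9.congr_deriv ?_
  simp only [Pi.sub_apply]
  field_simp
  ring

set_option maxHeartbeats 1000000 in


/-- The bandwidth-ratio function
`f ↦ 1 - α β_c - (1 - τ/(α(τ - Iw/f))) (βₑ(f) - α β_c)` with `βₑ(f) = Ē/(μ I w f²)`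
first decreases and then increases on the interval
`(Iw/((1-1/α)τ), √(F Ē/(μ w C)))`, provided the interval is nonempty. -/
theorem stmt11 (α τ I w Ebar μ C F βc a b : ℝ)
    (hα : 1 < α) (hτ : 0 < τ) (hI : 0 < I) (hw : 0 < w)
    (hE : 0 < Ebar) (hμ : 0 < μ) (hC : 0 < C) (hF : 0 < F)
    (hβc : βc = C / (α * I * F))
    (ha : a = I * w / ((1 - 1 / α) * τ))
    (hb : b = Real.sqrt (F * Ebar / (μ * w * C))) (hab : a < b) :
    let g : ℝ → ℝ := fun f =>
      1 - α * βc - (1 - τ / (α * (τ - I * w / f))) * (Ebar / (μ * I * w * f ^ 2) - α * βc)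
    ∃ f0 ∈ Set.Icc a b,
      AntitoneOn g (Set.Ioo a b ∩ Set.Iic f0) ∧
      MonotoneOn g (Set.Ioo a b ∩ Set.Ici f0) := by
  intro g
  have hα0 : (0:ℝ) < α := by linarith
  have hα1 : (0:ℝ) < α - 1 := by linarith
  have hα0' : α ≠ 0 := ne_of_gt hα0
  have h1α : (0:ℝ) < 1 - 1 / α := by
    have : 1 / α < 1 := by rw [div_lt_one hα0]; exact hα
    linarith
  have hK : α * βc = C / (I * F) := by
    rw [hβc]; field_simp
  have hKpos : 0 < α * βc := by rw [hK]; positivity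
  have ha2 : (α - 1) * τ * a = α * (I * w) := by
    rw [ha]
    field_simp
  have h0a : 0 < a := by
    rw [ha]; exact div_pos (by positivity) (mul_pos h1α hτ)
  have h0b : 0 < b := h0a.trans hab
  have hbsq : b ^ 2 = F * Ebar / (μ * w * C) := by
    rw [hb, Real.sq_sqrt (by positivity)]
  have hb2 : α * βc * (μ * I * w) * b ^ 2 = Ebar := by
    rw [hbsq, hK]; field_simp
  have hKM : 0 < α * βc * (μ * I * w) := mul_pos hKpos (by positivity)
  have hτa : I * w < τ * a := by nlinarith [ha2, mul_pos hI hw]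
  -- Psi positive at a
  have hEa : 0 < Ebar - α * βc * (μ * I * w) * a ^ 2 := by
    have h2 : a ^ 2 < b ^ 2 := by nlinarith
    nlinarith [mul_pos hKM (sub_pos.mpr h2)]
  have hza : (α - 1) * τ * a - α * (I * w) = 0 := by linarith
  have hΨa : 0 < Psi τ I w Ebar (α * βc) μ α a := by
    unfold Psi
    rw [hza]
    have h1 : 0 < τ * (I * w) * a := by positivity
    have h2 := mul_pos h1 hEa
    nlinarith [h2]
  -- Psi negative at b
  have hτb : 0 < τ * b - I * w := by nlinarith [hτa, mul_pos hτ (sub_pos.mpr hab)]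
  have hαb : 0 < (α - 1) * τ * b - α * (I * w) := by
    nlinarith [ha2, mul_pos (mul_pos hα1 hτ) (sub_pos.mpr hab)]
  have hzb : Ebar - α * βc * (μ * I * w) * b ^ 2 = 0 := by linarith
  have hΨb : Psi τ I w Ebar (α * βc) μ α b < 0 := by
    unfold Psi
    rw [hzb]
    nlinarith [mul_pos hE (mul_pos hτb hαb)]
  -- IVT: root f0 of Psi in (a,b)
  have hcontΨ : Continuous (Psi τ I w Ebar (α * βc) μ α) := by
    unfold Psi; fun_prop
  obtain ⟨f0, hf0mem, hf0⟩ :=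
    intermediate_value_Ioo' (le_of_lt hab) hcontΨ.continuousOn ⟨hΨb, hΨa⟩
  -- cubic concavity identity
  have hcubic : ∀ x y z : ℝ,
      Psi τ I w Ebar (α * βc) μ α y * (z - x) - Psi τ I w Ebar (α * βc) μ α x * (z - y)
        - Psi τ I w Ebar (α * βc) μ α z * (y - x)
      = (z - y) * (y - x) * (z - x)
          * (2 * Ebar * (α - 1) * τ ^ 2 + τ * (I * w) * (α * βc) * (μ * I * w) * (x + y + z)) := by
    intro x y z; unfold Psi; ring
  have hbrk : ∀ x : ℝ, 0 < x →
      0 < 2 * Ebar * (α - 1) * τ ^ 2 + τ * (I * w) * (α * βc) * (μ * I * w) * (a + x + f0) := by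
    intro x hx
    have t1 : 0 < 2 * Ebar * (α - 1) * τ ^ 2 :=
      mul_pos (mul_pos (by linarith) hα1) (by positivity)
    have t2 : 0 < τ * (I * w) * (α * βc) * (μ * I * w) :=
      mul_pos (mul_pos (by positivity) hKpos) (by positivity)
    have t3 : 0 < a + x + f0 := by
      have := hf0mem.1; linarith
    nlinarith [mul_pos t2 t3]
  -- Claim A : Psi > 0 on (a, f0)
  have claimA : ∀ x : ℝ, a < x → x < f0 → 0 < Psi τ I w Ebar (α * βc) μ α x := by
    intro x hax hxf
    have hid := hcubic a x f0
    have h0x : 0 < x := h0a.trans hax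
    have hbr := hbrk x h0x
    set Q := (f0 - x) * (x - a) * (f0 - a)
        * (2 * Ebar * (α - 1) * τ ^ 2 + τ * (I * w) * (α * βc) * (μ * I * w) * (a + x + f0)) with hQ
    have hrhs : 0 < Q := by
      rw [hQ]
      exact mul_pos (mul_pos (mul_pos (by linarith) (by linarith)) (by linarith)) hbr
    have hid2 : Psi τ I w Ebar (α * βc) μ α x * (f0 - a) - Psi τ I w Ebar (α * βc) μ α a * (f0 - x)
        - Psi τ I w Ebar (α * βc) μ α f0 * (x - a) = Q := by
      rw [hQ]; unfold Psi; ring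
    have hfa : 0 < f0 - a := by linarith
    have hpa : 0 < Psi τ I w Ebar (α * βc) μ α a * (f0 - x) :=
      mul_pos hΨa (by linarith)
    have hpos : 0 < Psi τ I w Ebar (α * βc) μ α x * (f0 - a) := by
      rw [hf0] at hid2; linarith [hid2, hrhs, hpa]
    by_contra hcon
    push_neg at hcon
    exact absurd hpos (not_lt.mpr (mul_nonpos_iff.mpr (Or.inr ⟨hcon, hfa.le⟩)))
  -- Claim B : Psi < 0 on (f0, b)
  have claimB : ∀ x : ℝ, f0 < x → x < b → Psi τ I w Ebar (α * βc) μ α x < 0 := by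
    intro x hfx hxb
    have hid := hcubic a f0 x
    have h0x : 0 < x := h0a.trans (hf0mem.1.trans hfx)
    have hbr := hbrk x h0x
    set Q := (x - f0) * (f0 - a) * (x - a)
        * (2 * Ebar * (α - 1) * τ ^ 2 + τ * (I * w) * (α * βc) * (μ * I * w) * (a + f0 + x)) with hQ
    have hrhs : 0 < Q := by
      rw [hQ]
      exact mul_pos (mul_pos (mul_pos (by linarith) (by linarith [hf0mem.1]))
        (by linarith [hf0mem.1])) (by nlinarith [hbrk x h0x])
    have hid2 : Psi τ I w Ebar (α * βc) μ α f0 * (x - a) - Psi τ I w Ebar (α * βc) μ α a * (x - f0)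
        - Psi τ I w Ebar (α * βc) μ α x * (f0 - a) = Q := by
      rw [hQ]; unfold Psi; ring
    have hfa : 0 < f0 - a := by linarith [hf0mem.1]
    have hpa : 0 < Psi τ I w Ebar (α * βc) μ α a * (x - f0) :=
      mul_pos hΨa (by linarith)
    have hneg : Psi τ I w Ebar (α * βc) μ α x * (f0 - a) < 0 := by
      rw [hf0] at hid2; linarith [hid2, hrhs, hpa]
    by_contra hcon
    push_neg at hcon
    exact absurd hneg (not_lt.mpr (mul_nonneg hcon hfa.le))
  -- derivative of g on (a, b)
  have hgd : ∀ x ∈ Set.Ioo a b,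
      HasDerivAt g (-(Psi τ I w Ebar (α * βc) μ α x)
        / (α * (μ * I * w) * (τ * x - I * w) ^ 2 * x ^ 3)) x := by
    intro x hx
    have h0x : 0 < x := h0a.trans hx.1
    have hτx : 0 < τ * x - I * w := by
      nlinarith [hτa, mul_pos hτ (sub_pos.mpr hx.1)]
    have h := aux_deriv α τ (I * w) (μ * I * w) Ebar (α * βc) hα0'
      (ne_of_gt h0x) (ne_of_gt hτx) (by positivity)
    unfold Psi
    exact h
  have hDpos : ∀ x : ℝ, 0 < x → 0 < τ * x - I * w →
      0 < α * (μ * I * w) * (τ * x - I * w) ^ 2 * x ^ 3 := by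
    intro x h1 h2
    exact mul_pos (mul_pos (mul_pos hα0 (by positivity)) (pow_pos h2 2)) (pow_pos h1 3)
  have hτxIoo : ∀ x ∈ Set.Ioo a b, 0 < τ * x - I * w := by
    intro x hx
    nlinarith [hτa, mul_pos hτ (sub_pos.mpr hx.1)]
  -- set identities
  have hS1 : Set.Ioo a b ∩ Set.Iic f0 = Set.Ioc a f0 := by
    ext x
    simp only [Set.mem_inter_iff, Set.mem_Ioo, Set.mem_Iic, Set.mem_Ioc]
    constructor
    · rintro ⟨⟨h1, _⟩, h3⟩; exact ⟨h1, h3⟩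
    · rintro ⟨h1, h2⟩; exact ⟨⟨h1, lt_of_le_of_lt h2 hf0mem.2⟩, h2⟩
  have hS2 : Set.Ioo a b ∩ Set.Ici f0 = Set.Ico f0 b := by
    ext x
    simp only [Set.mem_inter_iff, Set.mem_Ioo, Set.mem_Iic, Set.mem_Ico, Set.mem_Ici]
    constructor
    · rintro ⟨⟨_, h2⟩, h3⟩; exact ⟨h3, h2⟩
    · rintro ⟨h1, h2⟩; exact ⟨⟨lt_of_lt_of_le hf0mem.1 h1, h2⟩, h1⟩
  refine ⟨f0, Set.Ioo_subset_Icc_self hf0mem, ?_, ?_⟩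
  · rw [hS1]
    have hsub : Set.Ioc a f0 ⊆ Set.Ioo a b := fun x hx => ⟨hx.1, lt_of_le_of_lt hx.2 hf0mem.2⟩
    apply StrictAntiOn.antitoneOn
    apply strictAntiOn_of_deriv_neg (convex_Ioc a f0)
    · exact fun x hx => ((hgd x (hsub hx)).continuousAt).continuousWithinAt
    · intro x hx
      rw [interior_Ioc] at hx
      have hx' : x ∈ Set.Ioo a b := ⟨hx.1, hx.2.trans hf0mem.2⟩
      rw [(hgd x hx').deriv]
      apply div_neg_of_neg_of_pos
      · linarith [claimA x hx.1 hx.2]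
      · exact hDpos x (h0a.trans hx'.1) (hτxIoo x hx')
  · rw [hS2]
    have hsub : Set.Ico f0 b ⊆ Set.Ioo a b := fun x hx => ⟨lt_of_lt_of_le hf0mem.1 hx.1, hx.2⟩
    apply StrictMonoOn.monotoneOn
    apply strictMonoOn_of_deriv_pos (convex_Ico f0 b)
    · exact fun x hx => ((hgd x (hsub hx)).continuousAt).continuousWithinAt
    · intro x hx
      rw [interior_Ico] at hx
      have hx' : x ∈ Set.Ioo a b := ⟨hf0mem.1.trans hx.1, hx.2⟩
      rw [(hgd x hx').deriv]
      apply div_pos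
      · linarith [claimB x hx.1 hx.2]
      · exact hDpos x (h0a.trans hx'.1) (hτxIoo x hx')
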